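/- Let n ≥ 1 and k, l ≥ 0 be integers, and suppose either that n > l + k, or that n is odd and l + k is even. Then a linear map φ : (ℝⁿ)^{⊗k} → (ℝⁿ)^{⊗l} is SO(n)-equivariant if and only if it is O(n)-equivariant; that is, Hom_{SO(n)}((ℝⁿ)^{⊗k},(ℝⁿ)^{⊗l}) = Hom_{O(n)}((ℝⁿ)^{⊗k},(ℝⁿ)^{⊗l}). -/

import Mathlib

open Matrix

noncomputable section

/-- The matrix of `g^{⊗k}` in the standard basis of `(ℝⁿ)^{⊗k}`. -/
def tpowM {n : ℕ} (k : ℕ) (g : Matrix (Fin n) (Fin n) ℝ) :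
    Matrix (Fin k → Fin n) (Fin k → Fin n) ℝ :=
  Matrix.of fun I J => ∏ r, g (I r) (J r)

/-- Equivariance for the set of matrices satisfying `P`. -/
def IsGEquiv {n : ℕ} (k l : ℕ) (P : Matrix (Fin n) (Fin n) ℝ → Prop)
    (φ : ((Fin k → Fin n) → ℝ) →ₗ[ℝ] ((Fin l → Fin n) → ℝ)) : Prop :=
  ∀ g : Matrix (Fin n) (Fin n) ℝ, P g →
    φ ∘ₗ (tpowM k g).mulVecLin = (tpowM l g).mulVecLin ∘ₗ φ

lemma tpowM_mul {n : ℕ} (k : ℕ) (A B : Matrix (Fin n) (Fin n) ℝ) :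
    tpowM k (A * B) = tpowM k A * tpowM k B := by
  ext I J
  simp only [tpowM, of_apply, Matrix.mul_apply, Fintype.prod_sum]
  exact Finset.sum_congr rfl fun K _ => Finset.prod_mul_distrib

lemma tpowM_diagonal {n : ℕ} (k : ℕ) (d : Fin n → ℝ) :
    tpowM k (diagonal d) = diagonal (fun J => ∏ r, d (J r)) := by
  ext I J
  by_cases h : I = J
  · subst h; simp [tpowM, diagonal_apply_eq]
  · obtain ⟨r, hr⟩ : ∃ r, I r ≠ J r := by
      by_contra hc; push_neg at hc; exact h (funext hc)
    rw [diagonal_apply_ne _ h]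
    exact Finset.prod_eq_zero (Finset.mem_univ r) (diagonal_apply_ne _ hr)

lemma tpowM_neg {n : ℕ} (k : ℕ) (g : Matrix (Fin n) (Fin n) ℝ) :
    tpowM k (-g) = (-1 : ℝ) ^ k • tpowM k g := by
  ext I J
  simp only [tpowM, of_apply, Matrix.smul_apply, smul_eq_mul, Matrix.neg_apply]
  calc (∏ x, -g (I x) (J x)) = ∏ x, (-1 : ℝ) * g (I x) (J x) :=
        Finset.prod_congr rfl fun r _ => (neg_one_mul _).symm
    _ = (-1 : ℝ) ^ k * ∏ r, g (I r) (J r) := by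
        rw [Finset.prod_mul_distrib, Finset.prod_const]; simp

lemma key_iff {n k l : ℕ} (φ : ((Fin k → Fin n) → ℝ) →ₗ[ℝ] ((Fin l → Fin n) → ℝ))
    (A : Matrix (Fin k → Fin n) (Fin k → Fin n) ℝ)
    (B : Matrix (Fin l → Fin n) (Fin l → Fin n) ℝ) :
    φ ∘ₗ A.mulVecLin = B.mulVecLin ∘ₗ φ ↔
      LinearMap.toMatrix' φ * A = B * LinearMap.toMatrix' φ := by
  rw [← Matrix.toLin'_apply', ← Matrix.toLin'_apply']
  constructor
  · intro hh
    have := congrArg LinearMap.toMatrix' hh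
    simpa [LinearMap.toMatrix'_comp, LinearMap.toMatrix'_toLin'] using this
  · intro hh
    have := congrArg Matrix.toLin' hh
    simpa [Matrix.toLin'_mul, Matrix.toLin'_toMatrix'] using this

/-- Suppose either `n > l + k`, or `n` is odd and `l + k` is even.  Then a linear
map `(ℝⁿ)^{⊗k} → (ℝⁿ)^{⊗l}` is `SO(n)`-equivariant iff it is `O(n)`-equivariant. -/
theorem stmt8 (n k l : ℕ) (hn : 1 ≤ n)
    (h : l + k < n ∨ (Odd n ∧ Even (l + k)))
    (φ : ((Fin k → Fin n) → ℝ) →ₗ[ℝ] ((Fin l → Fin n) → ℝ)) :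
    IsGEquiv k l (fun g => gᵀ * g = 1 ∧ g.det = 1) φ ↔
      IsGEquiv k l (fun g => gᵀ * g = 1) φ := by
  constructor
  · intro hSO
    set M := LinearMap.toMatrix' φ with hM
    have hSO' : ∀ g : Matrix (Fin n) (Fin n) ℝ, gᵀ * g = 1 → g.det = 1 →
        M * tpowM k g = tpowM l g * M := fun g h1 h2 => (key_iff φ _ _).1 (hSO g ⟨h1, h2⟩)
    intro g hg
    rw [key_iff φ]
    have hdet : g.det = 1 ∨ g.det = -1 := by
      have h2 : g.det * g.det = 1 := by
        have := congrArg Matrix.det hg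
        simpa [Matrix.det_mul, Matrix.det_transpose, mul_comm] using this
      exact mul_self_eq_one_iff.mp h2
    rcases hdet with hd | hd
    · exact hSO' g hg hd
    rcases h with hlt | ⟨hodd, heven⟩
    · -- case l + k < n : use single sign flips
      -- Step A : double sign flips are in SO(n)
      have stepA : ∀ m p : Fin n, m ≠ p →
          M * tpowM k (diagonal fun i => if i = m ∨ i = p then (-1 : ℝ) else 1)
            = tpowM l (diagonal fun i => if i = m ∨ i = p then (-1 : ℝ) else 1) * M := by
        intro m p hmp
        apply hSO'
        · rw [Matrix.diagonal_transpose, Matrix.diagonal_mul_diagonal]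
          ext i j
          by_cases hij : i = j
          · subst hij; by_cases h1 : i = m ∨ i = p <;> simp [h1]
          · simp [diagonal_apply_ne _ hij, Matrix.one_apply_ne hij]
        · rw [Matrix.det_diagonal]
          have : ∀ i : Fin n, (if i = m ∨ i = p then (-1 : ℝ) else 1)
              = (if i = m then (-1 : ℝ) else 1) * (if i = p then (-1 : ℝ) else 1) := by
            intro i
            by_cases him : i = m <;> by_cases hip : i = p <;> simp_all
          rw [Finset.prod_congr rfl fun i _ => this i, Finset.prod_mul_distrib]
          simp [Finset.prod_ite_eq']
      -- Step B : single sign flips commute with M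
      have stepB : ∀ m : Fin n,
          M * tpowM k (diagonal fun i => if i = m then (-1 : ℝ) else 1)
            = tpowM l (diagonal fun i => if i = m then (-1 : ℝ) else 1) * M := by
        intro m
        rw [tpowM_diagonal, tpowM_diagonal]
        ext I J
        rw [Matrix.mul_diagonal, Matrix.diagonal_mul]
        set S : Finset (Fin n) :=
          (Finset.image I Finset.univ) ∪ (Finset.image J Finset.univ) with hS
        by_cases hm : m ∈ S
        · -- pick p outside S
          have hcard : S.card < Fintype.card (Fin n) := by
            calc S.card ≤ (Finset.image I Finset.univ).card
                + (Finset.image J Finset.univ).card := Finset.card_union_le _ _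
              _ ≤ l + k := by
                  have h1 := Finset.card_image_le (s := (Finset.univ : Finset (Fin l))) (f := I)
                  have h2 := Finset.card_image_le (s := (Finset.univ : Finset (Fin k))) (f := J)
                  simp only [Finset.card_univ, Fintype.card_fin] at h1 h2
                  omega
              _ < n := hlt
              _ = Fintype.card (Fin n) := (Fintype.card_fin n).symm
          obtain ⟨p, hp⟩ : ∃ p : Fin n, p ∉ S := by
            by_contra hc; push_neg at hc
            have : S = Finset.univ := Finset.eq_univ_iff_forall.mpr hc
            rw [this, Finset.card_univ] at hcard; omega
          have hmp : m ≠ p := fun he => hp (he ▸ hm)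
          have hA := stepA m p hmp
          rw [tpowM_diagonal, tpowM_diagonal] at hA
          have hA2 := congrFun (congrFun hA I) J
          rw [Matrix.mul_diagonal, Matrix.diagonal_mul] at hA2
          have eI : (∏ r, if I r = m ∨ I r = p then (-1 : ℝ) else 1)
              = ∏ r, if I r = m then (-1 : ℝ) else 1 := by
            refine Finset.prod_congr rfl fun r _ => ?_
            have : I r ≠ p := fun he => hp (hS ▸ Finset.mem_union_left _
              (Finset.mem_image.mpr ⟨r, Finset.mem_univ r, he⟩))
            by_cases hrm : I r = m <;> simp [hrm, this]
          have eJ : (∏ r, if J r = m ∨ J r = p then (-1 : ℝ) else 1)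
              = ∏ r, if J r = m then (-1 : ℝ) else 1 := by
            refine Finset.prod_congr rfl fun r _ => ?_
            have : J r ≠ p := fun he => hp (hS ▸ Finset.mem_union_right _
              (Finset.mem_image.mpr ⟨r, Finset.mem_univ r, he⟩))
            by_cases hrm : J r = m <;> simp [hrm, this]
          rw [eI, eJ] at hA2
          exact hA2
        · -- m appears in neither I nor J : both products are 1
          have hI : ∀ r, I r ≠ m := fun r he => hm (hS ▸ Finset.mem_union_left _
            (Finset.mem_image.mpr ⟨r, Finset.mem_univ r, he⟩))
          have hJ : ∀ r, J r ≠ m := fun r he => hm (hS ▸ Finset.mem_union_right _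
            (Finset.mem_image.mpr ⟨r, Finset.mem_univ r, he⟩))
          have eI : (∏ r, if I r = m then (-1 : ℝ) else 1) = 1 :=
            Finset.prod_eq_one fun r _ => by simp [hI r]
          have eJ : (∏ r, if J r = m then (-1 : ℝ) else 1) = 1 :=
            Finset.prod_eq_one fun r _ => by simp [hJ r]
          rw [eI, eJ, mul_one, one_mul]
      -- Step C : conclude
      set z : Fin n := ⟨0, hn⟩ with hz
      set D : Matrix (Fin n) (Fin n) ℝ := diagonal (fun i => if i = z then (-1 : ℝ) else 1)
        with hD
      have hDD : D * D = 1 := by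
        rw [hD, Matrix.diagonal_mul_diagonal]
        ext i j
        by_cases hij : i = j
        · subst hij; by_cases h1 : i = z <;> simp [h1]
        · simp [diagonal_apply_ne _ hij, Matrix.one_apply_ne hij]
      have hdetD : D.det = -1 := by
        rw [hD, Matrix.det_diagonal]
        simp [Finset.prod_ite_eq']
      have hDg : g = D * (D * g) := by rw [← Matrix.mul_assoc, hDD, Matrix.one_mul]
      have hO : (D * g)ᵀ * (D * g) = 1 := by
        rw [Matrix.transpose_mul, Matrix.mul_assoc, ← Matrix.mul_assoc Dᵀ]
        rw [hD, Matrix.diagonal_transpose, ← hD, hDD, Matrix.one_mul, hg]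
      have hdet1 : (D * g).det = 1 := by
        rw [Matrix.det_mul, hdetD, hd]; ring
      calc M * tpowM k g = M * (tpowM k D * tpowM k (D * g)) := by
            rw [← tpowM_mul, ← hDg]
        _ = (M * tpowM k D) * tpowM k (D * g) := by rw [Matrix.mul_assoc]
        _ = (tpowM l D * M) * tpowM k (D * g) := by rw [stepB z]
        _ = tpowM l D * (M * tpowM k (D * g)) := by rw [Matrix.mul_assoc]
        _ = tpowM l D * (tpowM l (D * g) * M) := by rw [hSO' (D * g) hO hdet1]
        _ = (tpowM l D * tpowM l (D * g)) * M := by rw [Matrix.mul_assoc]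
        _ = tpowM l g * M := by rw [← tpowM_mul, ← hDg]
    · -- case n odd, l + k even : use -g
      have h1 : (-g)ᵀ * (-g) = 1 := by simpa using hg
      have h2 : (-g).det = 1 := by
        rw [Matrix.det_neg, hd, Fintype.card_fin, Odd.neg_one_pow hodd]; ring
      have hh := hSO' (-g) h1 h2
      rw [tpowM_neg, tpowM_neg, Matrix.mul_smul, Matrix.smul_mul] at hh
      have hkl : ((-1 : ℝ)) ^ l = (-1 : ℝ) ^ k := by
        rcases Nat.even_or_odd k with he | ho
        · have hl : Even l := by
            rcases Nat.even_add.mp heven with ⟨h3, _⟩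
            exact (Nat.even_add.mp heven).mpr he
          rw [he.neg_one_pow, hl.neg_one_pow]
        · have hl : Odd l := by
            rcases Nat.even_add.mp heven with ⟨h3, h4⟩
            rw [← Nat.not_even_iff_odd] at ho ⊢
            exact fun hc => ho (h3 hc)
          rw [ho.neg_one_pow, hl.neg_one_pow]
      rw [hkl] at hh
      exact smul_right_injective _ (pow_ne_zero k (by norm_num : (-1 : ℝ) ≠ 0)) hh
  · intro hO g hg
    exact hO g hg.1
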